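/- Let E be a real vector space, V ⊆ E a set, C the convex cone generated by V, and f : E → ℝ a linear functional with f(v) ≥ 0 for all v ∈ V. Let F be the convex cone generated by {v ∈ V : f(v) = 0}. Then F = C ∩ ker f, and F is an extreme subset of C (a face of C). Moreover, if f(v) > 0 for every nonzero v ∈ V, then C is salient. -/

import Mathlib

open scoped BigOperators

/-- The convex cone generated by a set `V`: all finite nonnegative linear combinations
of elements of `V`. -/
def coneGen {E : Type*} [AddCommGroup E] [Module ℝ E] (V : Set E) : Set E :=
  {x | ∃ (n : ℕ) (c : Fin n → ℝ) (v : Fin n → E),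
    (∀ i, 0 ≤ c i) ∧ (∀ i, v i ∈ V) ∧ x = ∑ i, c i • v i}

/-- A cone `C` is salient if `x ∈ C` and `-x ∈ C` imply `x = 0`. -/
def SalientCone {E : Type*} [AddCommGroup E] [Module ℝ E] (C : Set E) : Prop :=
  ∀ x ∈ C, -x ∈ C → x = 0

lemma coneGen_zero_mem {E : Type*} [AddCommGroup E] [Module ℝ E] (V : Set E) :
    (0 : E) ∈ coneGen V :=
  ⟨0, ![], ![], by simp, by simp, by simp⟩

lemma coneGen_single {E : Type*} [AddCommGroup E] [Module ℝ E] {V : Set E}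
    {c : ℝ} {v : E} (hc : 0 ≤ c) (hv : v ∈ V) : c • v ∈ coneGen V :=
  ⟨1, fun _ => c, fun _ => v, fun _ => hc, fun _ => hv, by simp⟩

lemma coneGen_add {E : Type*} [AddCommGroup E] [Module ℝ E] {V : Set E}
    {x y : E} (hx : x ∈ coneGen V) (hy : y ∈ coneGen V) : x + y ∈ coneGen V := by
  obtain ⟨n, c, v, hc, hv, rfl⟩ := hx
  obtain ⟨m, d, w, hd, hw, rfl⟩ := hy
  refine ⟨n + m, Fin.addCases c d, Fin.addCases v w, ?_, ?_, ?_⟩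
  · intro i; refine Fin.addCases (fun j => ?_) (fun j => ?_) i <;> simp [hc, hd]
  · intro i; refine Fin.addCases (fun j => ?_) (fun j => ?_) i <;> simp [hv, hw]
  · rw [Fin.sum_univ_add]; simp

lemma coneGen_mono {E : Type*} [AddCommGroup E] [Module ℝ E] {V W : Set E}
    (h : V ⊆ W) : coneGen V ⊆ coneGen W := by
  rintro x ⟨n, c, v, hc, hv, rfl⟩
  exact ⟨n, c, v, hc, fun i => h (hv i), rfl⟩

/-- Induction principle for coneGen. -/
lemma coneGen_induction {E : Type*} [AddCommGroup E] [Module ℝ E] {V : Set E}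
    {P : E → Prop} (h0 : P 0)
    (hsingle : ∀ (c : ℝ) (v : E), 0 ≤ c → v ∈ V → P (c • v))
    (hadd : ∀ x y, x ∈ coneGen V → y ∈ coneGen V → P x → P y → P (x + y))
    {x : E} (hx : x ∈ coneGen V) : P x := by
  obtain ⟨n, c, v, hc, hv, rfl⟩ := hx
  induction n with
  | zero => simpa using h0
  | succ k ih =>
      rw [Fin.sum_univ_castSucc]
      refine hadd _ _ ?_ ?_ ?_ ?_
      · exact ⟨k, fun i => c i.castSucc, fun i => v i.castSucc,
          fun i => hc _, fun i => hv _, rfl⟩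
      · exact coneGen_single (hc _) (hv _)
      · exact ih _ _ (fun i => hc _) (fun i => hv _)
      · exact hsingle (c (Fin.last k)) (v (Fin.last k)) (hc _) (hv _)

/-- Supporting hyperplane construction: if `f` is a linear functional nonnegative on the
generating set `V` of a cone `C`, then the cone `F` generated by `{v ∈ V : f v = 0}`
equals `C ∩ ker f` and is an extreme subset (face) of `C`; moreover if `f` is strictly
positive on the nonzero elements of `V`, then `C` is salient. -/
theorem supporting_functional_face {E : Type*} [AddCommGroup E] [Module ℝ E]
    (V : Set E) (f : E →ₗ[ℝ] ℝ) (hf : ∀ v ∈ V, 0 ≤ f v) :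
    coneGen {v ∈ V | f v = 0} = coneGen V ∩ (LinearMap.ker f : Set E) ∧
    IsExtreme ℝ (coneGen V) (coneGen {v ∈ V | f v = 0}) ∧
    ((∀ v ∈ V, v ≠ 0 → 0 < f v) → SalientCone (coneGen V)) := by
  set S : Set E := {v ∈ V | f v = 0} with hS
  have key : ∀ x ∈ coneGen V, 0 ≤ f x ∧ (f x = 0 → x ∈ coneGen S) := by
    intro x hx
    refine coneGen_induction (P := fun y => 0 ≤ f y ∧ (f y = 0 → y ∈ coneGen S)) ?_ ?_ ?_ hx
    · exact ⟨by simp, fun _ => coneGen_zero_mem S⟩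
    · intro c v hc hv
      refine ⟨by simpa using mul_nonneg hc (hf v hv), fun h => ?_⟩
      simp only [map_smul, smul_eq_mul] at h
      rcases mul_eq_zero.1 h with h | h
      · rw [h, zero_smul]; exact coneGen_zero_mem S
      · exact coneGen_single hc ⟨hv, h⟩
    · intro a b ha hb ⟨ha1, ha2⟩ ⟨hb1, hb2⟩
      refine ⟨by simpa using add_nonneg ha1 hb1, fun h => ?_⟩
      rw [map_add] at h
      have hfa : f a = 0 := le_antisymm (by linarith) ha1
      have hfb : f b = 0 := le_antisymm (by linarith) hb1
      exact coneGen_add (ha2 hfa) (hb2 hfb)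
  have hFC : coneGen S ⊆ coneGen V := coneGen_mono fun v hv => hv.1
  have heq : coneGen S = coneGen V ∩ (LinearMap.ker f : Set E) := by
    ext x
    constructor
    · intro hx
      refine ⟨hFC hx, ?_⟩
      obtain ⟨n, c, v, hc, hv, rfl⟩ := hx
      simp only [SetLike.mem_coe, LinearMap.mem_ker, map_sum, map_smul, smul_eq_mul]
      exact Finset.sum_eq_zero fun i _ => by rw [(hv i).2, mul_zero]
    · rintro ⟨hxC, hxk⟩
      exact (key x hxC).2 hxk
  refine ⟨heq, ⟨hFC, ?_⟩, ?_⟩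
  · rintro x hx y hy z hz ⟨a, b, ha, hb, hab, rfl⟩
    have hfz : f (a • x + b • y) = 0 := by
      have := (heq ▸ hz : _ ∈ coneGen V ∩ _).2
      simpa using this
    simp only [map_add, map_smul, smul_eq_mul] at hfz
    have hfx := (key x hx).1
    have hfy := (key y hy).1
    have hx0 : f x = 0 := by nlinarith
    have hy0 : f y = 0 := by nlinarith
    exact (key x hx).2 hx0
  · intro hpos x hx hnx
    have h1 := (key x hx).1
    have h2 := (key (-x) hnx).1
    rw [map_neg] at h2
    have hfx : f x = 0 := le_antisymm (by linarith) h1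
    obtain ⟨n, c, v, hc, hv, rfl⟩ := (key x hx).2 hfx
    refine Finset.sum_eq_zero fun i _ => ?_
    have : v i = 0 := by
      by_contra hne
      exact absurd (hv i).2 (ne_of_gt (hpos _ (hv i).1 hne))
    rw [this, smul_zero]
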